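/- arXiv:0708.3152 — 4 statements merged into one kernel-verified Lean document; each statement's English description precedes it below -/
import Mathlib

section
/- Let N be a natural number, and for 0 ≤ i ≤ N let Q_i be defined by Q_i = (1/2)·∑_{l=0}^{i} (a_{l,i-l}·f_l·f_{i-l} − b_{l,i-l}·f_i) − ∑_{l=i}^{N} (a_{i,l-i}·f_i·f_{l-i} − b_{i,l-i}·f_l), where a and b are symmetric in their two indices. Then for any sequence (φ_i)_{0≤i≤N}, ∑_{i=0}^{N} Q_i·φ_i = −(1/2)·∑_{i=0}^{N} ∑_{l=0}^{i} (a_{l,i-l}·f_l·f_{i-l} − b_{l,i-l}·f_i)·(φ_l + φ_{i-l} − φ_i). -/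
open Finset

theorem discrete_weak_formulation (N : ℕ) (a b : ℕ → ℕ → ℝ) (f φ : ℕ → ℝ)
    (ha : ∀ i j, a i j = a j i) (hb : ∀ i j, b i j = b j i) :
    ∑ i ∈ range (N + 1),
      ((1 / 2) * ∑ l ∈ range (i + 1),
          (a l (i - l) * f l * f (i - l) - b l (i - l) * f i)
        - ∑ l ∈ Icc i N, (a i (l - i) * f i * f (l - i) - b i (l - i) * f l)) * φ i
    = -(1 / 2) * ∑ i ∈ range (N + 1), ∑ l ∈ range (i + 1),
        (a l (i - l) * f l * f (i - l) - b l (i - l) * f i)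
          * (φ l + φ (i - l) - φ i) := by
  set G : ℕ → ℕ → ℝ := fun i l => a l (i - l) * f l * f (i - l) - b l (i - l) * f i with hG
  -- reflection: ∑_l G i l * φ (i - l) = ∑_l G i l * φ l
  have hrefl : ∀ i ∈ range (N + 1),
      ∑ l ∈ range (i + 1), G i l * φ (i - l)
        = ∑ l ∈ range (i + 1), G i l * φ l := by
    intro i _
    rw [← Finset.sum_range_reflect]
    refine Finset.sum_congr rfl fun l hl => ?_
    have hl' : l ≤ i := Nat.lt_succ_iff.mp (Finset.mem_range.mp hl)
    simp only [hG, Nat.add_sub_cancel]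
    rw [Nat.sub_sub_self hl', ha (i - l) l, hb (i - l) l]
    ring
  -- swap: the Icc double sum equals ∑_i ∑_{l ≤ i} G i l * φ l
  have hswap :
      ∑ i ∈ range (N + 1), ∑ l ∈ Icc i N,
          (a i (l - i) * f i * f (l - i) - b i (l - i) * f l) * φ i
        = ∑ i ∈ range (N + 1), ∑ l ∈ range (i + 1), G i l * φ l := by
    have h := Finset.sum_Ico_Ico_comm 0 (N + 1)
      (fun i l => (a i (l - i) * f i * f (l - i) - b i (l - i) * f l) * φ i)
    simp only [hG, Finset.range_eq_Ico, ← Finset.Ico_add_one_right_eq_Icc]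
    exact h
  -- expand the left-hand side
  have lhs_eq :
      ∑ i ∈ range (N + 1),
        ((1 / 2) * ∑ l ∈ range (i + 1), G i l
          - ∑ l ∈ Icc i N, (a i (l - i) * f i * f (l - i) - b i (l - i) * f l)) * φ i
      = (1 / 2) * (∑ i ∈ range (N + 1), ∑ l ∈ range (i + 1), G i l * φ i)
        - ∑ i ∈ range (N + 1), ∑ l ∈ range (i + 1), G i l * φ l := by
    rw [← hswap]
    rw [Finset.mul_sum, ← Finset.sum_sub_distrib]
    refine Finset.sum_congr rfl fun i _ => ?_
    rw [sub_mul, mul_assoc, Finset.sum_mul, Finset.sum_mul]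
  -- expand the right-hand side
  have rhs_eq :
      ∑ i ∈ range (N + 1), ∑ l ∈ range (i + 1), G i l * (φ l + φ (i - l) - φ i)
      = (∑ i ∈ range (N + 1), ∑ l ∈ range (i + 1), G i l * φ l)
        + (∑ i ∈ range (N + 1), ∑ l ∈ range (i + 1), G i l * φ l)
        - ∑ i ∈ range (N + 1), ∑ l ∈ range (i + 1), G i l * φ i := by
    have key : ∀ i ∈ range (N + 1),
        ∑ l ∈ range (i + 1), G i l * (φ l + φ (i - l) - φ i)
        = (∑ l ∈ range (i + 1), G i l * φ l)
          + (∑ l ∈ range (i + 1), G i l * φ l)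
          - ∑ l ∈ range (i + 1), G i l * φ i := by
      intro i hi
      have step : ∑ l ∈ range (i + 1), G i l * (φ l + φ (i - l) - φ i)
          = (∑ l ∈ range (i + 1), G i l * φ l)
            + (∑ l ∈ range (i + 1), G i l * φ (i - l))
            - ∑ l ∈ range (i + 1), G i l * φ i := by
        rw [← Finset.sum_add_distrib, ← Finset.sum_sub_distrib]
        exact Finset.sum_congr rfl fun l _ => by ring
      rw [step, hrefl i hi]
    rw [Finset.sum_congr rfl key, ← Finset.sum_add_distrib, ← Finset.sum_sub_distrib]
  rw [lhs_eq, rhs_eq]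
  ring
end

section
/- Define for 0 ≤ i ≤ N−1 the fluxes C_{i+1/2} = ∑_{j=0}^{i} ∑_{l=i+1}^{N-1} j·a_{j,l-j}·f_j·f_{l-j} and F_{i+1/2} = ∑_{j=0}^{i} ∑_{l=i+1}^{N-1} j·b_{j,l-j}·f_l, with C_{-1/2} = F_{-1/2} = 0. Then for every i ≥ 1, −(C_{i+1/2} − C_{i-1/2}) + (F_{i+1/2} − F_{i-1/2}) = i·Q_i, where Q_i = (1/2)·∑_{l=0}^{i} (a_{l,i-l}·f_l·f_{i-l} − b_{l,i-l}·f_i) − ∑_{l=i}^{N-1} (a_{i,l-i}·f_i·f_{l-i} − b_{i,l-i}·f_l). -/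
open Finset

theorem flux_difference_eq (N : ℕ) (a b : ℕ → ℕ → ℝ) (f : ℕ → ℝ)
    (ha : ∀ i j, a i j = a j i) (hb : ∀ i j, b i j = b j i)
    (i : ℕ) (hi1 : 1 ≤ i) (hiN : i ≤ N - 1) :
    -((∑ j ∈ range (i + 1), ∑ l ∈ Icc (i + 1) (N - 1),
          (j : ℝ) * a j (l - j) * f j * f (l - j))
      - ∑ j ∈ range i, ∑ l ∈ Icc i (N - 1),
          (j : ℝ) * a j (l - j) * f j * f (l - j))
    + ((∑ j ∈ range (i + 1), ∑ l ∈ Icc (i + 1) (N - 1),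
          (j : ℝ) * b j (l - j) * f l)
      - ∑ j ∈ range i, ∑ l ∈ Icc i (N - 1),
          (j : ℝ) * b j (l - j) * f l)
    = (i : ℝ) *
      ((1 / 2) * ∑ l ∈ range (i + 1),
          (a l (i - l) * f l * f (i - l) - b l (i - l) * f i)
        - ∑ l ∈ Icc i (N - 1),
          (a i (l - i) * f i * f (l - i) - b i (l - i) * f l)) := by
  have key : ∀ c : ℕ → ℕ → ℝ, (∀ p q, c p q = c q p) →
      2 * ∑ j ∈ range (i+1), (j:ℝ) * c j (i-j) = (i:ℝ) * ∑ j ∈ range (i+1), c j (i-j) := by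
    intro c hc
    have h := Finset.sum_range_reflect (fun j => (j:ℝ) * c j (i-j)) (i+1)
    rw [two_mul]
    nth_rw 1 [← h]
    rw [← Finset.sum_add_distrib, Finset.mul_sum]
    apply Finset.sum_congr rfl
    intro j hj
    simp only [Nat.add_sub_cancel]
    have hji : j ≤ i := Nat.lt_succ_iff.mp (Finset.mem_range.mp hj)
    rw [Nat.sub_sub_self hji, hc (i-j) j, Nat.cast_sub hji]
    ring
  have hIcc : ∀ g : ℕ → ℝ, ∑ l ∈ Icc i (N-1), g l = g i + ∑ l ∈ Icc (i+1) (N-1), g l := by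
    intro g
    rw [Finset.Icc_eq_cons_Ioc hiN, Finset.sum_cons, Finset.Icc_add_one_left_eq_Ioc]
  rw [Finset.sum_range_succ, Finset.sum_range_succ]
  simp only [hIcc, Nat.sub_self]
  simp only [Finset.sum_add_distrib, Finset.sum_sub_distrib]
  have ka := key (fun p q => a p q * f p * f q) (by intro p q; rw [ha p q]; ring)
  have kb := key (fun p q => b p q * f i) (by intro p q; simp only [hb p q])
  have ea : ∑ j ∈ range (i+1), (j:ℝ) * (a j (i-j) * f j * f (i-j))
      = ∑ j ∈ range (i+1), (j:ℝ) * a j (i-j) * f j * f (i-j) :=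
    Finset.sum_congr rfl fun _ _ => by ring
  have eb : ∑ j ∈ range (i+1), (j:ℝ) * (b j (i-j) * f i)
      = ∑ j ∈ range (i+1), (j:ℝ) * b j (i-j) * f i :=
    Finset.sum_congr rfl fun _ _ => by ring
  rw [ea] at ka
  rw [eb] at kb
  have sa : ∑ x ∈ range (i+1), (x:ℝ) * a x (i-x) * f x * f (i-x)
      = (∑ x ∈ range i, (x:ℝ) * a x (i-x) * f x * f (i-x)) + (i:ℝ) * a i 0 * f i * f 0 := by
    rw [Finset.sum_range_succ, Nat.sub_self]
  have sb : ∑ x ∈ range (i+1), (x:ℝ) * b x (i-x) * f i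
      = (∑ x ∈ range i, (x:ℝ) * b x (i-x) * f i) + (i:ℝ) * b i 0 * f i := by
    rw [Finset.sum_range_succ, Nat.sub_self]
  have ta : ∑ l ∈ Icc (i+1) (N-1), (i:ℝ) * a i (l-i) * f i * f (l-i)
      = (i:ℝ) * ∑ l ∈ Icc (i+1) (N-1), a i (l-i) * f i * f (l-i) := by
    rw [Finset.mul_sum]; exact Finset.sum_congr rfl fun _ _ => by ring
  have tb : ∑ l ∈ Icc (i+1) (N-1), (i:ℝ) * b i (l-i) * f l
      = (i:ℝ) * ∑ l ∈ Icc (i+1) (N-1), b i (l-i) * f l := by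
    rw [Finset.mul_sum]; exact Finset.sum_congr rfl fun _ _ => by ring
  linear_combination ka/2 - kb/2 - sa + sb - ta + tb
end

section
/- For any symmetric a, b : ℕ×ℕ → ℝ and any positive sequence (f_i), taking φ_i = ln(f_i/M_i) in the discrete weak formulation (with M_i satisfying the discrete detailed balance a_{l,i-l}·M_l·M_{i-l} = b_{l,i-l}·M_i), one obtains ∑_{i=0}^{N} Q_i·ln(f_i/M_i) = −(1/2)·∑_{i=0}^{N} ∑_{l=0}^{i} (a_{l,i-l}·f_l·f_{i-l} − b_{l,i-l}·f_i)·ln( (a_{l,i-l}·f_l·f_{i-l}) / (b_{l,i-l}·f_i) ). -/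
open Finset

private lemma tri_swap (N : ℕ) (g : ℕ → ℕ → ℝ) :
    ∑ i ∈ range (N + 1), ∑ l ∈ range (i + 1), g i l
      = ∑ l ∈ range (N + 1), ∑ i ∈ Icc l N, g i l := by
  induction N with
  | zero => simp
  | succ n ih =>
    rw [sum_range_succ, ih, sum_range_succ (fun l => ∑ i ∈ Icc l (n + 1), g i l),
      sum_range_succ (g (n + 1))]
    simp only [Icc_self, sum_singleton]
    have h2 : ∑ l ∈ range (n + 1), ∑ i ∈ Icc l (n + 1), g i l
        = ∑ l ∈ range (n + 1), (∑ i ∈ Icc l n, g i l + g (n + 1) l) := by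
      refine sum_congr rfl fun l hl => ?_
      rw [mem_range] at hl
      exact Finset.sum_Icc_succ_top (by omega : l ≤ n + 1) _
    rw [h2, sum_add_distrib]
    ring

private lemma abstract_swap (N : ℕ) (D : ℕ → ℕ → ℝ) (φ : ℕ → ℝ)
    (hsym : ∀ l i, l ≤ i → D (i - l) i = D l i) :
    ∑ i ∈ range (N + 1),
        ((1 / 2) * ∑ l ∈ range (i + 1), D l i - ∑ l ∈ Icc i N, D i l) * φ i
      = -(1 / 2) * ∑ i ∈ range (N + 1), ∑ l ∈ range (i + 1),
          D l i * (φ l + φ (i - l) - φ i) := by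
  have refl : ∀ i, ∑ l ∈ range (i + 1), D l i * φ (i - l)
      = ∑ l ∈ range (i + 1), D l i * φ l := by
    intro i
    have h := Finset.sum_range_reflect (fun l => D l i * φ (i - l)) (i + 1)
    simp only [Nat.add_sub_cancel] at h
    rw [← h]
    refine sum_congr rfl fun l hl => ?_
    rw [mem_range, Nat.lt_succ_iff] at hl
    rw [hsym l i hl, Nat.sub_sub_self hl]
  have tri : ∑ i ∈ range (N + 1), ∑ l ∈ range (i + 1), D l i * φ l
      = ∑ i ∈ range (N + 1), (∑ l ∈ Icc i N, D i l) * φ i := by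
    rw [tri_swap N (fun i l => D l i * φ l)]
    exact sum_congr rfl fun l _ => by rw [sum_mul]
  have expand : ∀ i, ∑ l ∈ range (i + 1), D l i * (φ l + φ (i - l) - φ i)
      = 2 * (∑ l ∈ range (i + 1), D l i * φ l)
        - (∑ l ∈ range (i + 1), D l i) * φ i := by
    intro i
    rw [two_mul]
    nth_rewrite 2 [← refl i]
    rw [sum_mul, ← sum_add_distrib, ← sum_sub_distrib]
    exact sum_congr rfl fun l _ => by ring
  have lhs_eq : ∑ i ∈ range (N + 1),
        ((1 / 2) * ∑ l ∈ range (i + 1), D l i - ∑ l ∈ Icc i N, D i l) * φ i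
      = (1 / 2) * (∑ i ∈ range (N + 1), (∑ l ∈ range (i + 1), D l i) * φ i)
        - ∑ i ∈ range (N + 1), (∑ l ∈ Icc i N, D i l) * φ i := by
    rw [Finset.mul_sum, ← sum_sub_distrib]
    exact sum_congr rfl fun i _ => by ring
  rw [lhs_eq]
  simp only [expand]
  rw [sum_sub_distrib, ← Finset.mul_sum, tri]
  ring

theorem weak_formulation_entropy (N : ℕ) (a b : ℕ → ℕ → ℝ) (f M : ℕ → ℝ)
    (ha : ∀ i j, a i j = a j i) (hb : ∀ i j, b i j = b j i)
    (hapos : ∀ i j, 0 < a i j) (hbpos : ∀ i j, 0 < b i j)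
    (hf : ∀ i, 0 < f i) (hM : ∀ i, 0 < M i)
    (hdb : ∀ l i, l ≤ i → i ≤ N →
      a l (i - l) * M l * M (i - l) = b l (i - l) * M i) :
    ∑ i ∈ range (N + 1),
      ((1 / 2) * ∑ l ∈ range (i + 1),
          (a l (i - l) * f l * f (i - l) - b l (i - l) * f i)
        - ∑ l ∈ Icc i N, (a i (l - i) * f i * f (l - i) - b i (l - i) * f l))
        * Real.log (f i / M i)
    = -(1 / 2) * ∑ i ∈ range (N + 1), ∑ l ∈ range (i + 1),
        (a l (i - l) * f l * f (i - l) - b l (i - l) * f i)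
          * Real.log ((a l (i - l) * f l * f (i - l)) / (b l (i - l) * f i)) := by
  have hlog : ∀ i ∈ range (N + 1), ∀ l ∈ range (i + 1),
      Real.log ((a l (i - l) * f l * f (i - l)) / (b l (i - l) * f i))
        = Real.log (f l / M l) + Real.log (f (i - l) / M (i - l))
          - Real.log (f i / M i) := by
    intro i hi l hl
    rw [mem_range, Nat.lt_succ_iff] at hi hl
    have harg : (a l (i - l) * f l * f (i - l)) / (b l (i - l) * f i)
        = (f l / M l) * (f (i - l) / M (i - l)) / (f i / M i) := by
      have h := hdb l i hl hi
      have hb0 := (hbpos l (i - l)).ne'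
      have hf0 := (hf i).ne'
      have hMl := (hM l).ne'
      have hMil := (hM (i - l)).ne'
      have hMi := (hM i).ne'
      field_simp
      linear_combination (f l * f (i - l)) * h
    have h1 : f l / M l ≠ 0 := div_ne_zero (hf l).ne' (hM l).ne'
    have h2 : f (i - l) / M (i - l) ≠ 0 := div_ne_zero (hf (i - l)).ne' (hM (i - l)).ne'
    have h3 : f i / M i ≠ 0 := div_ne_zero (hf i).ne' (hM i).ne'
    rw [harg, Real.log_div (mul_ne_zero h1 h2) h3, Real.log_mul h1 h2]
  have hrw : ∑ i ∈ range (N + 1), ∑ l ∈ range (i + 1),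
        (a l (i - l) * f l * f (i - l) - b l (i - l) * f i)
          * Real.log ((a l (i - l) * f l * f (i - l)) / (b l (i - l) * f i))
      = ∑ i ∈ range (N + 1), ∑ l ∈ range (i + 1),
        (a l (i - l) * f l * f (i - l) - b l (i - l) * f i)
          * (Real.log (f l / M l) + Real.log (f (i - l) / M (i - l))
            - Real.log (f i / M i)) := by
    refine sum_congr rfl fun i hi => sum_congr rfl fun l hl => ?_
    rw [hlog i hi l hl]
  rw [hrw]
  have hsym : ∀ l i, l ≤ i →
      (fun l i => a l (i - l) * f l * f (i - l) - b l (i - l) * f i) (i - l) i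
        = (fun l i => a l (i - l) * f l * f (i - l) - b l (i - l) * f i) l i := by
    intro l i hli
    simp only
    rw [Nat.sub_sub_self hli, ha (i - l) l, hb (i - l) l]
    ring
  exact abstract_swap N (fun l i => a l (i - l) * f l * f (i - l) - b l (i - l) * f i)
    (fun i => Real.log (f i / M i)) hsym
end

section
/- Mass bound from relative entropy: if f_i, M_i > 0 and w_i > 0 are finite families, then (1/2)·∑_i w_i·f_i ≤ (e² + 1/e)·∑_i w_i·M_i + (1/2)·H(f|M), where H(f|M) = ∑_i w_i·( f_i·(ln(f_i/M_i) − 1) + M_i ). -/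
open Finset

theorem mass_bound_from_entropy (s : Finset ℕ) (w f M : ℕ → ℝ)
    (hw : ∀ i ∈ s, 0 < w i) (hf : ∀ i ∈ s, 0 < f i) (hM : ∀ i ∈ s, 0 < M i) :
    (1 / 2) * ∑ i ∈ s, w i * f i
      ≤ (Real.exp 1 ^ 2 + 1 / Real.exp 1) * ∑ i ∈ s, w i * M i
        + (1 / 2) * ∑ i ∈ s, w i * (f i * (Real.log (f i / M i) - 1) + M i) := by
  rw [Finset.mul_sum, Finset.mul_sum, Finset.mul_sum, ← Finset.sum_add_distrib]
  apply Finset.sum_le_sum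
  intro i hi
  have hwi := hw i hi
  have hfi := hf i hi
  have hMi := hM i hi
  have he : (2 : ℝ) ≤ Real.exp 1 := by
    have := Real.add_one_le_exp (1 : ℝ); linarith
  have he0 : (0 : ℝ) < Real.exp 1 := Real.exp_pos 1
  have hlog : 2 - Real.exp 1 * M i / f i ≤ Real.log (f i / M i) := by
    have h := Real.log_le_sub_one_of_pos
      (show 0 < Real.exp 1 * M i / f i by positivity)
    rw [Real.log_div (by positivity) hfi.ne',
      Real.log_mul (Real.exp_ne_zero 1) hMi.ne', Real.log_exp] at h
    rw [Real.log_div hfi.ne' hMi.ne']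
    linarith
  have hmain : 2 * f i - Real.exp 1 * M i ≤ f i * Real.log (f i / M i) := by
    have h2 := mul_le_mul_of_nonneg_left hlog hfi.le
    have h3 : f i * (Real.exp 1 * M i / f i) = Real.exp 1 * M i := by
      field_simp
    nlinarith
  have h4 := mul_le_mul_of_nonneg_left hmain hwi.le
  have h5 : 0 < w i * M i := by positivity
  have h6 : 0 < 1 / Real.exp 1 := by positivity
  nlinarith [mul_pos hwi hMi, sq_nonneg (Real.exp 1 - 2)]
end
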